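/- With f = X(X−1)(X−α₁)(X−α₂)(X−α₃) ∈ 𝔽_p[X] and c_k the coefficient of X^k in f^{(p−1)/2}, one has ∑_{a ∈ 𝔽_p} ( a·(1+a)·(α₁+a)·(α₂+a)·(α₃+a) )^{(p−1)/2} = (−1)^{(p−1)/2} · ( −c_{p−1} − c_{2p−2} ). In particular this sum vanishes if and only if the trace c_{p−1} + c_{2p−2} of the Cartier–Manin matrix vanishes. -/

import Mathlib

open Polynomial Finset

lemma zmod_sum_pow (p : ℕ) [Fact p.Prime] (k : ℕ) (hk : k ≠ 0) :
    ∑ x : ZMod p, x ^ k = if (p - 1) ∣ k then (-1 : ZMod p) else 0 := by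
  classical
  let φ : (ZMod p)ˣ ↪ ZMod p := ⟨fun x ↦ x, fun _ _ h ↦ Units.ext h⟩
  have hmap : univ.map φ = univ \ {0} := by
    ext x
    simp only [mem_map, mem_univ, Function.Embedding.coeFn_mk, true_and, mem_sdiff,
      mem_singleton, φ]
    exact isUnit_iff_ne_zero
  calc ∑ x : ZMod p, x ^ k = ∑ x ∈ univ \ {(0 : ZMod p)}, x ^ k := by
        rw [← sum_sdiff ({0} : Finset (ZMod p)).subset_univ, sum_singleton,
          zero_pow hk, add_zero]
    _ = ∑ x : (ZMod p)ˣ, ((x : ZMod p)) ^ k := by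
        rw [← hmap, univ.sum_map φ]; rfl
    _ = _ := by
        have := FiniteField.sum_pow_units (ZMod p) k
        rw [ZMod.card] at this
        simpa using this

/-- For the quintic `f = X(X-1)(X-α₁)(X-α₂)(X-α₃)` over `𝔽_p`, one has
`∑_{a ∈ 𝔽_p} (a(1+a)(α₁+a)(α₂+a)(α₃+a))^((p-1)/2) = (-1)^((p-1)/2)·(-c_{p-1} - c_{2p-2})`. -/
theorem sum_shifted_eq_neg_trace (p : ℕ) [Fact p.Prime] (hp : 5 ≤ p)
    (α₁ α₂ α₃ : ZMod p)
    (h12 : α₁ ≠ α₂) (h13 : α₁ ≠ α₃) (h23 : α₂ ≠ α₃)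
    (h10 : α₁ ≠ 0) (h20 : α₂ ≠ 0) (h30 : α₃ ≠ 0)
    (h11 : α₁ ≠ 1) (h21 : α₂ ≠ 1) (h31 : α₃ ≠ 1)
    (f : Polynomial (ZMod p))
    (hf : f = X * (X - 1) * (X - C α₁) * (X - C α₂) * (X - C α₃))
    (c : ℕ → ZMod p) (hc : ∀ k, c k = (f ^ ((p - 1) / 2)).coeff k) :
    ∑ a : ZMod p,
        (a * (1 + a) * (α₁ + a) * (α₂ + a) * (α₃ + a)) ^ ((p - 1) / 2) =
      (-1) ^ ((p - 1) / 2) * (-c (p - 1) - c (2 * p - 2)) := by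
  classical
  have hprime : p.Prime := Fact.out
  set m := (p - 1) / 2 with hm
  have hodd : Odd p := hprime.odd_of_ne_two (by omega)
  obtain ⟨t, ht⟩ := hodd
  have h2m : 2 * m = p - 1 := by omega
  have hm2 : 2 ≤ m := by omega
  -- pointwise identity
  have key : ∀ a : ZMod p,
      (a * (1 + a) * (α₁ + a) * (α₂ + a) * (α₃ + a)) ^ m
        = (-1) ^ m * (f.eval (-a)) ^ m := by
    intro a
    rw [← mul_pow]
    congr 1
    simp only [hf, eval_mul, eval_sub, eval_X, eval_one, eval_C]
    ring
  simp only [key]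
  rw [← Finset.mul_sum]
  congr 1
  have hre : ∑ a : ZMod p, (f.eval (-a)) ^ m = ∑ a : ZMod p, (f.eval a) ^ m :=
    Fintype.sum_bijective (fun a : ZMod p => -a) (neg_involutive).bijective _ _
      (fun a => rfl)
  rw [hre]
  -- degree bounds
  have hdf : f.natDegree ≤ 5 := by rw [hf]; compute_degree
  have hdg : (f ^ m).natDegree < 5 * m + 1 :=
    Nat.lt_succ_of_le (natDegree_pow_le.trans ((Nat.mul_le_mul_left m hdf).trans (by omega)))
  have hev : ∀ a : ZMod p,
      (f.eval a) ^ m = ∑ i ∈ range (5 * m + 1), (f ^ m).coeff i * a ^ i := by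
    intro a
    rw [← eval_pow]
    exact eval_eq_sum_range' hdg a
  rw [Finset.sum_congr rfl fun a _ => hev a, Finset.sum_comm]
  simp only [← Finset.mul_sum]
  have hsub : ({p - 1, 2 * p - 2} : Finset ℕ) ⊆ range (5 * m + 1) := by
    intro i hi
    simp only [mem_insert, mem_singleton] at hi
    rw [mem_range]
    omega
  have hvan : ∀ i ∈ range (5 * m + 1), i ∉ ({p - 1, 2 * p - 2} : Finset ℕ) →
      (f ^ m).coeff i * ∑ a : ZMod p, a ^ i = 0 := by
    intro i hi hni
    simp only [mem_insert, mem_singleton] at hni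
    push_neg at hni
    have hiN : i < 5 * m + 1 := mem_range.mp hi
    rcases Nat.eq_zero_or_pos i with rfl | hi0
    · have : ∑ a : ZMod p, a ^ 0 = 0 := by
        simp [Finset.card_univ, ZMod.card, ZMod.natCast_self]
      rw [this, mul_zero]
    · rw [zmod_sum_pow p i (by omega), if_neg, mul_zero]
      rintro ⟨j, hj⟩
      rcases j with _ | _ | _ | n
      · omega
      · omega
      · omega
      · have h3 := Nat.mul_le_mul_left (p - 1) (show 3 ≤ n + 1 + 1 + 1 by omega)
        omega
  rw [← Finset.sum_subset hsub hvan,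
    Finset.sum_pair (show p - 1 ≠ 2 * p - 2 by omega),
    zmod_sum_pow p (p - 1) (by omega), zmod_sum_pow p (2 * p - 2) (by omega),
    if_pos dvd_rfl, if_pos ⟨2, by omega⟩, hc, hc]
  ring
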